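/- Let Ω ⊂ ℝⁿ be a bounded open set, q ∈ L^∞(Ω), and suppose ∫_Ω q v w dx = 0 for all pairs of functions v, w of the form v(x) = e^{(x·(α+iβ))/h}(e^{−ix·ξ} + r₁(x)), w(x) = e^{−(x·(α+iβ))/h}(1 + r₂(x)), where ξ ∈ ℝⁿ, α,β ∈ ℝⁿ are unit vectors with ξ·α = ξ·β = α·β = 0, and ‖r₁‖_{L^∞(Ω)}, ‖r₂‖_{L^∞(Ω)} → 0 as h → 0. Then ∫_Ω q(x) e^{−ix·ξ} dx = 0 for every such ξ; in particular if n ≥ 3 so that for every ξ ∈ ℝⁿ such α, β exist, then q = 0 a.e. in Ω. -/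

import Mathlib

open MeasureTheory

open Complex FourierTransform RealInnerProductSpace Module
open scoped ContDiff

noncomputable def mySchwartz {E : Type*} [NormedAddCommGroup E] [NormedSpace ℝ E] (g : E → ℂ)
    (hg : ContDiff ℝ ∞ g) (hsupp : HasCompactSupport g) : SchwartzMap E ℂ where
  toFun := g
  smooth' := hg
  decay' := by
    intro k m
    have hg' : ContDiff ℝ (m : ℕ∞) g := hg.of_le (by exact_mod_cast le_top)
    have hcont : Continuous fun x => ‖x‖ ^ k * ‖iteratedFDeriv ℝ m g x‖ :=
      (continuous_norm.pow k).mul ((hg'.continuous_iteratedFDeriv le_rfl).norm)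
    have hcs : HasCompactSupport fun x => ‖x‖ ^ k * ‖iteratedFDeriv ℝ m g x‖ :=
      HasCompactSupport.mul_left ((hsupp.iteratedFDeriv m).norm)
    obtain ⟨C, hC⟩ := hcont.bounded_above_of_compact_support hcs
    refine ⟨C, fun x => ?_⟩
    have := hC x
    rwa [Real.norm_eq_abs, _root_.abs_of_nonneg (by positivity)] at this

theorem ft_zero_ae {V : Type*} [NormedAddCommGroup V] [InnerProductSpace ℝ V]
    [MeasurableSpace V] [BorelSpace V] [FiniteDimensional ℝ V]
    (F : V → ℂ) (hF : Integrable F volume) (hz : ∀ w, 𝓕 F w = 0) :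
    ∀ᵐ x, F x = 0 := by
  apply ae_eq_zero_of_integral_contDiff_smul_eq_zero hF.locallyIntegrable
  intro g hg hgs
  have hgc : ContDiff ℝ ∞ (fun x => (g x : ℂ)) := Complex.ofRealCLM.contDiff.comp hg
  have hgcs : HasCompactSupport (fun x => (g x : ℂ)) :=
    hgs.comp_left (g := fun r : ℝ => (r : ℂ)) (by simp)
  set gc := mySchwartz _ hgc hgcs with hgcdef
  set h0 := (FourierTransform.fourierCLE ℂ (SchwartzMap V ℂ)).symm gc with h0def
  have h1 : 𝓕 ⇑h0 = ⇑gc := by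
    have h2 := (FourierTransform.fourierCLE ℂ (SchwartzMap V ℂ)).apply_symm_apply gc
    calc 𝓕 ⇑h0 = ⇑(FourierTransform.fourierCLE ℂ (SchwartzMap V ℂ) h0) := rfl
    _ = ⇑gc := congrArg _ h2
  have hflipL : (innerₗ V).flip = innerₗ V := flip_innerₗ V
  have flip := VectorFourier.integral_fourierIntegral_smul_eq_flip (L := innerₗ V)
    (μ := (volume : Measure V)) (ν := (volume : Measure V))
    Real.continuous_fourierChar continuous_inner h0.integrable hF
  rw [hflipL] at flip
  have hR : ∫ x, h0 x • (VectorFourier.fourierIntegral Real.fourierChar volume (innerₗ V) F x) = 0 := by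
    have : ∀ x, h0 x • (VectorFourier.fourierIntegral Real.fourierChar volume (innerₗ V) F x) = 0 := by
      intro x
      have : VectorFourier.fourierIntegral Real.fourierChar volume (innerₗ V) F x = 𝓕 F x := rfl
      rw [this, hz x, smul_zero]
    simp only [smul_eq_mul] at this ⊢
    simp [this]
  have hL : ∀ ξ, (VectorFourier.fourierIntegral Real.fourierChar volume (innerₗ V) ⇑h0 ξ) = gc ξ := by
    intro ξ
    have : VectorFourier.fourierIntegral Real.fourierChar volume (innerₗ V) ⇑h0 ξ = 𝓕 ⇑h0 ξ := rfl
    rw [this, h1]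
  simp only [hL] at flip
  rw [hR] at flip
  rw [← flip]
  apply integral_congr_ae
  filter_upwards with x
  show g x • F x = gc x • F x
  have : gc x = (g x : ℂ) := rfl
  rw [this, smul_eq_mul, ← Complex.real_smul]

lemma exists_ab (n : ℕ) (hn : 3 ≤ n) (ξ : Fin n → ℝ) :
    ∃ α β : Fin n → ℝ, (∑ j, α j ^ 2 = 1) ∧ (∑ j, β j ^ 2 = 1) ∧
      (∑ j, ξ j * α j = 0) ∧ (∑ j, ξ j * β j = 0) ∧ (∑ j, α j * β j = 0) := by
  classical
  set E := EuclideanSpace ℝ (Fin n) with hE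
  set ξ' : E := WithLp.toLp 2 ξ with hξ'
  set W : Submodule ℝ E := (ℝ ∙ ξ')ᗮ with hW
  have hfr : finrank ℝ (ℝ ∙ ξ') + finrank ℝ W = n := by
    rw [Submodule.finrank_add_finrank_orthogonal]
    exact finrank_euclideanSpace_fin
  have hle : finrank ℝ (ℝ ∙ ξ') ≤ 1 := by
    rcases eq_or_ne ξ' 0 with h | h
    · rw [h, Submodule.span_zero_singleton, finrank_bot]; norm_num
    · rw [finrank_span_singleton h]
  have hrank : 2 ≤ finrank ℝ W := by omega
  set b := stdOrthonormalBasis ℝ W with hb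
  set α' : E := (↑(b ⟨0, by omega⟩) : E) with hα'
  set β' : E := (↑(b ⟨1, by omega⟩) : E) with hβ'
  have hmemα : α' ∈ W := (b ⟨0, by omega⟩).2
  have hmemβ : β' ∈ W := (b ⟨1, by omega⟩).2
  have horth := b.orthonormal
  rw [orthonormal_iff_ite] at horth
  have hαα : (inner ℝ α' α' : ℝ) = 1 := by
    have := horth ⟨0, by omega⟩ ⟨0, by omega⟩
    rw [Submodule.coe_inner, if_pos rfl] at this; exact this
  have hββ : (inner ℝ β' β' : ℝ) = 1 := by
    have := horth ⟨1, by omega⟩ ⟨1, by omega⟩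
    rw [Submodule.coe_inner, if_pos rfl] at this; exact this
  have hαβ : (inner ℝ α' β' : ℝ) = 0 := by
    have := horth ⟨0, by omega⟩ ⟨1, by omega⟩
    rw [Submodule.coe_inner, if_neg (by simp)] at this; exact this
  have hξα : (inner ℝ ξ' α' : ℝ) = 0 :=
    hmemα ξ' (Submodule.mem_span_singleton_self ξ')
  have hξβ : (inner ℝ ξ' β' : ℝ) = 0 :=
    hmemβ ξ' (Submodule.mem_span_singleton_self ξ')
  refine ⟨WithLp.ofLp α', WithLp.ofLp β', ?_, ?_, ?_, ?_, ?_⟩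
  · rw [← hαα, PiLp.inner_apply]; simp [sq]
  · rw [← hββ, PiLp.inner_apply]; simp [sq]
  · rw [← hξα, PiLp.inner_apply]; simp [hξ', mul_comm]
  · rw [← hξβ, PiLp.inner_apply]; simp [hξ', mul_comm]
  · rw [← hαβ, PiLp.inner_apply]; simp; exact Finset.sum_congr rfl fun j _ => mul_comm _ _


/-- Recovery of the potential from integral identities against products of CGO-type functions:
if `∫_Ω q v w dx = 0` for all pairs `v, w` of the indicated exponential form with remainders
tending to `0` in `L^∞(Ω)` as `h → 0⁺`, then the Fourier transform of `q` vanishes at every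
admissible frequency `ξ`; in particular, if `n ≥ 3`, then `q = 0` a.e. in `Ω`. -/
theorem stmt16 (n : ℕ) (Ω : Set (Fin n → ℝ)) (hΩo : IsOpen Ω)
    (hΩb : Bornology.IsBounded Ω)
    (q : (Fin n → ℝ) → ℂ)
    (hq : MemLp q ⊤ (volume.restrict Ω))
    (H : ∀ ξ α β : Fin n → ℝ,
      (∑ j, (α j) ^ 2 = 1) → (∑ j, (β j) ^ 2 = 1) →
      (∑ j, ξ j * α j = 0) → (∑ j, ξ j * β j = 0) → (∑ j, α j * β j = 0) →
      ∀ r₁ r₂ : ℝ → (Fin n → ℝ) → ℂ,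
        (∀ ε > (0 : ℝ), ∃ δ > (0 : ℝ), ∀ h : ℝ, 0 < h → h < δ →
          ∀ x ∈ Ω, ‖r₁ h x‖ ≤ ε ∧ ‖r₂ h x‖ ≤ ε) →
        ∀ h : ℝ, 0 < h →
          ∫ x in Ω, q x *
            (Complex.exp ((∑ j, (x j : ℂ) * ((α j : ℂ) + Complex.I * (β j : ℂ))) / (h : ℂ)) *
              (Complex.exp (-Complex.I * ∑ j, (x j : ℂ) * (ξ j : ℂ)) + r₁ h x)) *
            (Complex.exp (-(∑ j, (x j : ℂ) * ((α j : ℂ) + Complex.I * (β j : ℂ))) / (h : ℂ)) *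
              (1 + r₂ h x)) = 0) :
    (∀ ξ α β : Fin n → ℝ,
      (∑ j, (α j) ^ 2 = 1) → (∑ j, (β j) ^ 2 = 1) →
      (∑ j, ξ j * α j = 0) → (∑ j, ξ j * β j = 0) → (∑ j, α j * β j = 0) →
      ∫ x in Ω, q x * Complex.exp (-Complex.I * ∑ j, (x j : ℂ) * (ξ j : ℂ)) = 0) ∧
    (3 ≤ n → ∀ᵐ x ∂(volume.restrict Ω), q x = 0) := by
  have part1 : ∀ ξ α β : Fin n → ℝ,
      (∑ j, (α j) ^ 2 = 1) → (∑ j, (β j) ^ 2 = 1) →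
      (∑ j, ξ j * α j = 0) → (∑ j, ξ j * β j = 0) → (∑ j, α j * β j = 0) →
      ∫ x in Ω, q x * Complex.exp (-Complex.I * ∑ j, (x j : ℂ) * (ξ j : ℂ)) = 0 := by
    intro ξ α β h1 h2 h3 h4 h5
    have key := H ξ α β h1 h2 h3 h4 h5 (fun _ _ => 0) (fun _ _ => 0)
      (fun ε hε => ⟨1, one_pos, fun h _ _ x _ => ⟨by simp [hε.le], by simp [hε.le]⟩⟩) 1 one_pos
    rw [← key]
    apply integral_congr_ae
    filter_upwards with x
    set s : ℂ := ∑ j, (x j : ℂ) * ((α j : ℂ) + Complex.I * (β j : ℂ))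
    have hss : Complex.exp (s / ((1:ℝ):ℂ)) * Complex.exp (-s / ((1:ℝ):ℂ)) = 1 := by
      rw [← Complex.exp_add]; norm_num
    rw [show q x * (Complex.exp (s / ((1:ℝ):ℂ)) *
          (Complex.exp (-Complex.I * ∑ j, (x j : ℂ) * (ξ j : ℂ)) + 0)) *
          (Complex.exp (-s / ((1:ℝ):ℂ)) * (1 + 0))
        = q x * Complex.exp (-Complex.I * ∑ j, (x j : ℂ) * (ξ j : ℂ)) *
          (Complex.exp (s / ((1:ℝ):ℂ)) * Complex.exp (-s / ((1:ℝ):ℂ))) from by ring, hss, mul_one]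
  refine ⟨part1, ?_⟩
  intro hn
  -- finiteness and integrability
  have hvol : volume Ω < ⊤ := hΩb.measure_lt_top
  have hfin : IsFiniteMeasure (volume.restrict Ω) :=
    ⟨by rwa [Measure.restrict_apply_univ]⟩
  have hqi : IntegrableOn q Ω := hq.integrable le_top
  set f : (Fin n → ℝ) → ℂ := Ω.indicator q with hf
  have hfi : Integrable f volume := (integrable_indicator_iff hΩo.measurableSet).2 hqi
  have hmp := EuclideanSpace.volume_preserving_symm_measurableEquiv_toLp (Fin n)
  set F : EuclideanSpace ℝ (Fin n) → ℂ := fun x => f (WithLp.ofLp x) with hFdef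
  have hfiE : Integrable F (volume : Measure (EuclideanSpace ℝ (Fin n))) :=
    (hmp.integrable_comp_emb (MeasurableEquiv.measurableEmbedding _)).2 hfi
  have hFT : ∀ w : EuclideanSpace ℝ (Fin n), 𝓕 F w = 0 := by
    intro w
    rw [Real.fourier_eq']
    obtain ⟨α, β, h1, h2, h3, h4, h5⟩ := exists_ab n hn (fun j => 2 * Real.pi * w j)
    have hp1 := part1 (fun j => 2 * Real.pi * w j) α β h1 h2 h3 h4 h5
    rw [← integral_indicator hΩo.measurableSet, ← hmp.integral_comp'] at hp1
    rw [← hp1]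
    apply integral_congr_ae
    filter_upwards with v
    have hinner : (inner (𝕜 := ℝ) (v : EuclideanSpace ℝ (Fin n)) w : ℝ) = ∑ j, v j * w j :=
      by simp [PiLp.inner_apply, mul_comm]
    rcases Classical.em (WithLp.ofLp v ∈ Ω) with hv | hv
    · show Complex.exp _ • f (WithLp.ofLp v) = Ω.indicator _ (WithLp.ofLp v)
      rw [hf, Set.indicator_of_mem hv, Set.indicator_of_mem hv, smul_eq_mul, mul_comm]
      congr 1
      congr 1
      rw [hinner]
      push_cast
      rw [show ∑ j, (v j : ℂ) * ((2 : ℂ) * (Real.pi : ℂ) * (w j : ℂ))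
            = 2 * (Real.pi : ℂ) * ∑ j, (v j : ℂ) * (w j : ℂ) from by
          rw [Finset.mul_sum]; exact Finset.sum_congr rfl fun j _ => by ring]
      ring
    · show Complex.exp _ • f (WithLp.ofLp v) = Ω.indicator _ (WithLp.ofLp v)
      rw [hf, Set.indicator_of_notMem hv, Set.indicator_of_notMem hv, smul_zero]
  have hae' : ∀ᵐ x ∂(volume : Measure (EuclideanSpace ℝ (Fin n))), F x = 0 :=
    ft_zero_ae F hfiE hFT
  have hae : ∀ᵐ x ∂(volume : Measure (Fin n → ℝ)), f x = 0 := by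
    rw [← hmp.map_eq]; exact (MeasurableEquiv.measurableEmbedding _).ae_map_iff.2 hae'
  have hae2 : ∀ᵐ x ∂(volume.restrict Ω), f x = 0 := ae_restrict_of_ae hae
  have hae3 : f =ᵐ[volume.restrict Ω] q :=
    indicator_ae_eq_restrict hΩo.measurableSet
  filter_upwards [hae2, hae3] with x hx1 hx2
  rw [← hx2, hx1]
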